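/- Let d ∈ (0, 1/2) and let G : ℝ → ℝ be bounded and Lipschitz. Then there exists a constant c ≥ 0 (depending only on d, the Lipschitz constant of G, and sup|G|) such that for all θ = (λ, μ₁, μ₂) and θ′ = (λ′, μ₁′, μ₂′) with λ, λ′ ∈ [0, 1/2 − d]: sup_{x∈ℝ} |(A_θ⁻¹G)(x) − (A_{θ′}⁻¹G)(x)| ≤ c |θ − θ′|₂, where |·|₂ is the Euclidean norm on ℝ³. -/

import Mathlib

/-- The inverse mixing operator `A_θ⁻¹`, defined by the geometric series. -/
noncomputable def Ainv (lam mu₁ mu₂ : ℝ) (H : ℝ → ℝ) (x : ℝ) : ℝ :=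
  (1 / (1 - lam)) * ∑' k : ℕ, (-lam / (1 - lam)) ^ k * H (x + mu₂ + (k : ℝ) * (mu₂ - mu₁))

/-- Euclidean norm on `ℝ³ = ℝ × ℝ × ℝ`. -/
noncomputable def enorm3 (θ : ℝ × ℝ × ℝ) : ℝ :=
  Real.sqrt (θ.1 ^ 2 + θ.2.1 ^ 2 + θ.2.2 ^ 2)

lemma pow_abs_sub_le {ρ : ℝ} (a b : ℝ) (ha : |a| ≤ ρ) (hb : |b| ≤ ρ) (k : ℕ) :
    ρ * |a ^ k - b ^ k| ≤ (k : ℝ) * ρ ^ k * |a - b| := by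
  have hρ0 : 0 ≤ ρ := le_trans (abs_nonneg a) ha
  induction k with
  | zero => simp
  | succ k ih =>
    have h2 : |a ^ (k + 1) - b ^ (k + 1)| ≤ |a| * |a ^ k - b ^ k| + |a - b| * |b| ^ k := by
      have h1 : a ^ (k + 1) - b ^ (k + 1) = a * (a ^ k - b ^ k) + (a - b) * b ^ k := by ring
      rw [h1]
      refine (abs_add_le _ _).trans ?_
      rw [abs_mul, abs_mul, abs_pow]
    have hbk : |b| ^ k ≤ ρ ^ k := pow_le_pow_left₀ (abs_nonneg b) hb k
    have hak : |a| * (ρ * |a ^ k - b ^ k|) ≤ ρ * ((k : ℝ) * ρ ^ k * |a - b|) := by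
      calc |a| * (ρ * |a ^ k - b ^ k|) ≤ |a| * ((k : ℝ) * ρ ^ k * |a - b|) := by gcongr
        _ ≤ ρ * ((k : ℝ) * ρ ^ k * |a - b|) := by gcongr
    calc ρ * |a ^ (k + 1) - b ^ (k + 1)|
        ≤ ρ * (|a| * |a ^ k - b ^ k| + |a - b| * |b| ^ k) :=
          mul_le_mul_of_nonneg_left h2 hρ0
      _ = |a| * (ρ * |a ^ k - b ^ k|) + ρ * (|a - b| * |b| ^ k) := by ring
      _ ≤ ρ * ((k : ℝ) * ρ ^ k * |a - b|) + ρ * (|a - b| * ρ ^ k) := by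
          refine add_le_add hak ?_
          gcongr
      _ = ((k : ℝ) + 1) * ρ ^ (k + 1) * |a - b| := by ring
      _ = ((k + 1 : ℕ) : ℝ) * ρ ^ (k + 1) * |a - b| := by push_cast; ring

lemma comp_le₁ (x y z : ℝ) : |x| ≤ Real.sqrt (x ^ 2 + y ^ 2 + z ^ 2) := by
  rw [← Real.sqrt_sq_eq_abs]
  exact Real.sqrt_le_sqrt (by nlinarith [sq_nonneg y, sq_nonneg z])

lemma comp_le₂ (x y z : ℝ) : |y| ≤ Real.sqrt (x ^ 2 + y ^ 2 + z ^ 2) := by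
  rw [← Real.sqrt_sq_eq_abs]
  exact Real.sqrt_le_sqrt (by nlinarith [sq_nonneg x, sq_nonneg z])

lemma comp_le₃ (x y z : ℝ) : |z| ≤ Real.sqrt (x ^ 2 + y ^ 2 + z ^ 2) := by
  rw [← Real.sqrt_sq_eq_abs]
  exact Real.sqrt_le_sqrt (by nlinarith [sq_nonneg x, sq_nonneg y])

set_option maxHeartbeats 1600000 in
/-- For `G` bounded and Lipschitz, the map `θ ↦ A_θ⁻¹ G` is Lipschitz for the supremum
norm, uniformly over `λ ∈ [0, 1/2 − d]`. -/
theorem stmt_10 (d : ℝ) (hd : d ∈ Set.Ioo (0 : ℝ) (1 / 2))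
    (G : ℝ → ℝ) (hGbd : ∃ M : ℝ, ∀ x : ℝ, |G x| ≤ M)
    (L : NNReal) (hGlip : LipschitzWith L G) :
    ∃ c : ℝ, 0 ≤ c ∧
      ∀ θ θ' : ℝ × ℝ × ℝ, θ.1 ∈ Set.Icc (0 : ℝ) (1 / 2 - d) →
        θ'.1 ∈ Set.Icc (0 : ℝ) (1 / 2 - d) →
        ∀ x : ℝ,
          |Ainv θ.1 θ.2.1 θ.2.2 G x - Ainv θ'.1 θ'.2.1 θ'.2.2 G x|
            ≤ c * enorm3 (θ - θ') := by
  obtain ⟨M, hM⟩ := hGbd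
  have hM0 : 0 ≤ M := (abs_nonneg _).trans (hM 0)
  obtain ⟨hd0, hd2⟩ := hd
  set ρ : ℝ := (1 / 2 - d) / (1 / 2 + d) with hρdef
  have hρ0 : 0 < ρ := div_pos (by linarith) (by linarith)
  have hρ1 : ρ < 1 := (div_lt_one (by linarith)).2 (by linarith)
  have hsum : Summable (fun k : ℕ => ((k : ℝ) + 1) * ρ ^ k) := by
    have h1 : Summable (fun n : ℕ => (n : ℝ) ^ 1 * ρ ^ n) :=
      summable_pow_mul_geometric_of_norm_lt_one 1
        (by rw [Real.norm_eq_abs, abs_of_pos hρ0]; exact hρ1)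
    have h2 : Summable (fun n : ℕ => ρ ^ n) := summable_geometric_of_lt_one hρ0.le hρ1
    exact (h1.add h2).congr (fun n => by ring)
  set C : ℝ := 12 * M + 4 * (L : ℝ) with hCdef
  have hC0 : 0 ≤ C := by positivity
  set S : ℝ := ∑' k : ℕ, ((k : ℝ) + 1) * ρ ^ k with hSdef
  have hS0 : 0 ≤ S := tsum_nonneg (fun k => by positivity)
  have hLip : ∀ p q : ℝ, |G p - G q| ≤ (L : ℝ) * |p - q| := by
    intro p q
    have := hGlip.dist_le_mul p q
    rwa [Real.dist_eq, Real.dist_eq] at this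
  refine ⟨C * S / ρ, by positivity, ?_⟩
  rintro ⟨l, m1, m2⟩ ⟨l', m1', m2'⟩ hθ hθ' x
  obtain ⟨hl0, hl1⟩ := hθ
  obtain ⟨hl0', hl1'⟩ := hθ'
  simp only at hl0 hl1 hl0' hl1'
  set D : ℝ := enorm3 (((l, m1, m2) : ℝ × ℝ × ℝ) - (l', m1', m2')) with hDdef
  have hDeq : D = Real.sqrt ((l - l') ^ 2 + (m1 - m1') ^ 2 + (m2 - m2') ^ 2) := rfl
  have hD0 : 0 ≤ D := by rw [hDeq]; positivity
  have hDl : |l - l'| ≤ D := hDeq ▸ comp_le₁ _ _ _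
  have hDm1 : |m1 - m1'| ≤ D := hDeq ▸ comp_le₂ _ _ _
  have hDm2 : |m2 - m2'| ≤ D := hDeq ▸ comp_le₃ _ _ _
  -- basic facts about the two parameters
  have h1l : (0 : ℝ) < 1 - l := by linarith
  have h1l' : (0 : ℝ) < 1 - l' := by linarith
  have hu2 : 1 / (1 - l) ≤ 2 := by rw [div_le_iff₀ h1l]; linarith
  have hv2 : 1 / (1 - l') ≤ 2 := by rw [div_le_iff₀ h1l']; linarith
  have hu0 : 0 < 1 / (1 - l) := by positivity
  have hv0 : 0 < 1 / (1 - l') := by positivity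
  have habs : |(-l / (1 - l))| ≤ ρ := by
    rw [abs_div, abs_neg, abs_of_nonneg hl0, abs_of_pos h1l]
    exact div_le_div₀ (by linarith) hl1 (by linarith) (by linarith)
  have habs' : |(-l' / (1 - l'))| ≤ ρ := by
    rw [abs_div, abs_neg, abs_of_nonneg hl0', abs_of_pos h1l']
    exact div_le_div₀ (by linarith) hl1' (by linarith) (by linarith)
  set f : ℕ → ℝ :=
    fun k => (1 / (1 - l)) * ((-l / (1 - l)) ^ k * G (x + m2 + (k : ℝ) * (m2 - m1))) with hfdef
  set f' : ℕ → ℝ :=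
    fun k => (1 / (1 - l')) * ((-l' / (1 - l')) ^ k * G (x + m2' + (k : ℝ) * (m2' - m1'))) with hf'def
  have hA : Ainv l m1 m2 G x = ∑' k, f k := by
    simp only [Ainv, hfdef]; exact tsum_mul_left.symm
  have hA' : Ainv l' m1' m2' G x = ∑' k, f' k := by
    simp only [Ainv, hf'def]; exact tsum_mul_left.symm
  have hfb : ∀ k, ‖f k‖ ≤ 2 * M * ρ ^ k := by
    intro k
    have : ‖f k‖ = |1 / (1 - l)| * (|(-l / (1 - l))| ^ k * |G (x + m2 + (k : ℝ) * (m2 - m1))|) := by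
      rw [Real.norm_eq_abs, hfdef]; rw [abs_mul, abs_mul, abs_pow]
    rw [this, abs_of_pos hu0]
    calc (1 / (1 - l)) * (|(-l / (1 - l))| ^ k * |G (x + m2 + (k : ℝ) * (m2 - m1))|)
        ≤ 2 * (ρ ^ k * M) := by
          refine mul_le_mul hu2 ?_ (by positivity) (by norm_num)
          exact mul_le_mul (pow_le_pow_left₀ (abs_nonneg _) habs k) (hM _) (abs_nonneg _)
            (by positivity)
      _ = 2 * M * ρ ^ k := by ring
  have hf'b : ∀ k, ‖f' k‖ ≤ 2 * M * ρ ^ k := by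
    intro k
    have : ‖f' k‖ = |1 / (1 - l')| * (|(-l' / (1 - l'))| ^ k * |G (x + m2' + (k : ℝ) * (m2' - m1'))|) := by
      rw [Real.norm_eq_abs, hf'def]; rw [abs_mul, abs_mul, abs_pow]
    rw [this, abs_of_pos hv0]
    calc (1 / (1 - l')) * (|(-l' / (1 - l'))| ^ k * |G (x + m2' + (k : ℝ) * (m2' - m1'))|)
        ≤ 2 * (ρ ^ k * M) := by
          refine mul_le_mul hv2 ?_ (by positivity) (by norm_num)
          exact mul_le_mul (pow_le_pow_left₀ (abs_nonneg _) habs' k) (hM _) (abs_nonneg _)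
            (by positivity)
      _ = 2 * M * ρ ^ k := by ring
  have hgeom : Summable (fun k : ℕ => 2 * M * ρ ^ k) :=
    (summable_geometric_of_lt_one hρ0.le hρ1).mul_left (2 * M)
  have hf : Summable f := Summable.of_norm_bounded hgeom hfb
  have hf' : Summable f' := Summable.of_norm_bounded hgeom hf'b
  -- the key term-by-term estimate
  have hkey : ∀ k : ℕ, ‖f k - f' k‖ ≤ C * D / ρ * (((k : ℝ) + 1) * ρ ^ k) := by
    intro k
    set u : ℝ := 1 / (1 - l)
    set v : ℝ := 1 / (1 - l')
    set a : ℝ := -l / (1 - l)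
    set b : ℝ := -l' / (1 - l')
    set g : ℝ := G (x + m2 + (k : ℝ) * (m2 - m1))
    set g' : ℝ := G (x + m2' + (k : ℝ) * (m2' - m1'))
    have hP0 : (0 : ℝ) ≤ ρ ^ k := by positivity
    have hP1 : ρ ^ k ≤ 1 := pow_le_one₀ hρ0.le hρ1.le
    have hbk : |b| ^ k ≤ ρ ^ k := pow_le_pow_left₀ (abs_nonneg b) habs' k
    have hab4 : |a - b| ≤ 4 * |l - l'| := by
      have hEq : a - b = (l' - l) * (u * v) := by
        simp only [a, b, u, v]; field_simp; ring
      rw [hEq, abs_mul, abs_mul, abs_of_pos hu0, abs_of_pos hv0]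
      calc |l' - l| * (u * v) ≤ |l' - l| * (2 * 2) := by
            refine mul_le_mul_of_nonneg_left ?_ (abs_nonneg _)
            exact mul_le_mul hu2 hv2 hv0.le (by norm_num)
        _ = 4 * |l - l'| := by rw [abs_sub_comm]; ring
    have huv4 : |u - v| ≤ 4 * |l - l'| := by
      have hEq : u - v = (l - l') * (u * v) := by
        simp only [u, v]; field_simp; ring
      rw [hEq, abs_mul, abs_mul, abs_of_pos hu0, abs_of_pos hv0]
      calc |l - l'| * (u * v) ≤ |l - l'| * (2 * 2) := by
            refine mul_le_mul_of_nonneg_left ?_ (abs_nonneg _)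
            exact mul_le_mul hu2 hv2 hv0.le (by norm_num)
        _ = 4 * |l - l'| := by ring
    have hpow : ρ * |a ^ k - b ^ k| ≤ (k : ℝ) * ρ ^ k * |a - b| :=
      pow_abs_sub_le a b habs habs' k
    have hgg' : |g - g'| ≤ (L : ℝ) * (((k : ℝ) + 1) * (|m1 - m1'| + |m2 - m2'|)) := by
      have h1 := hLip (x + m2 + (k : ℝ) * (m2 - m1)) (x + m2' + (k : ℝ) * (m2' - m1'))
      have h2 : |(x + m2 + (k : ℝ) * (m2 - m1)) - (x + m2' + (k : ℝ) * (m2' - m1'))|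
          ≤ ((k : ℝ) + 1) * (|m1 - m1'| + |m2 - m2'|) := by
        have hEq : (x + m2 + (k : ℝ) * (m2 - m1)) - (x + m2' + (k : ℝ) * (m2' - m1'))
            = ((m2 - m2') + (k : ℝ) * (m2 - m2')) + (k : ℝ) * -(m1 - m1') := by ring
        rw [hEq]
        refine (abs_add_le _ _).trans ?_
        have e1 : |(m2 - m2') + (k : ℝ) * (m2 - m2')| ≤ ((k : ℝ) + 1) * |m2 - m2'| := by
          have : (m2 - m2') + (k : ℝ) * (m2 - m2') = ((k : ℝ) + 1) * (m2 - m2') := by ring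
          rw [this, abs_mul, abs_of_nonneg (by positivity : (0:ℝ) ≤ (k : ℝ) + 1)]
        have e2 : |(k : ℝ) * -(m1 - m1')| ≤ ((k : ℝ) + 1) * |m1 - m1'| := by
          rw [abs_mul, abs_neg, abs_of_nonneg (by positivity : (0:ℝ) ≤ (k : ℝ))]
          have := abs_nonneg (m1 - m1')
          linarith
        linarith [e1, e2]
      exact h1.trans (by
        refine mul_le_mul_of_nonneg_left h2 ?_
        exact NNReal.coe_nonneg L)
    -- reduce to a ρ-multiplied inequality
    rw [Real.norm_eq_abs, div_mul_eq_mul_div, le_div_iff₀ hρ0]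
    have e0 : |f k - f' k| ≤ |u * a ^ k - v * b ^ k| * |g| + |v| * |b| ^ k * |g - g'| := by
      have hEq : f k - f' k = (u * a ^ k - v * b ^ k) * g + (v * b ^ k) * (g - g') := by
        simp only [hfdef, hf'def]; ring
      rw [hEq]
      refine (abs_add_le _ _).trans ?_
      rw [abs_mul, abs_mul, abs_mul, abs_pow]
    have e2 : |u * a ^ k - v * b ^ k| ≤ |u| * |a ^ k - b ^ k| + |u - v| * |b| ^ k := by
      have hEq : u * a ^ k - v * b ^ k = u * (a ^ k - b ^ k) + (u - v) * b ^ k := by ring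
      rw [hEq]
      refine (abs_add_le _ _).trans ?_
      rw [abs_mul, abs_mul, abs_pow]
    -- term 1 bound
    have t1 : |u * a ^ k - v * b ^ k| * ρ ≤ (8 * (k : ℝ) + 4) * (ρ ^ k * |l - l'|) := by
      calc |u * a ^ k - v * b ^ k| * ρ
          ≤ (|u| * |a ^ k - b ^ k| + |u - v| * |b| ^ k) * ρ :=
            mul_le_mul_of_nonneg_right e2 hρ0.le
        _ = |u| * (ρ * |a ^ k - b ^ k|) + (|u - v| * |b| ^ k) * ρ := by ring
        _ ≤ 2 * ((k : ℝ) * ρ ^ k * |a - b|) + (4 * |l - l'| * ρ ^ k) * 1 := by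
            refine add_le_add ?_ ?_
            · rw [abs_of_pos hu0]
              exact mul_le_mul hu2 hpow (by positivity) (by norm_num)
            · refine mul_le_mul ?_ hρ1.le hρ0.le (by positivity)
              exact mul_le_mul huv4 hbk (by positivity) (by positivity)
        _ ≤ 2 * ((k : ℝ) * ρ ^ k * (4 * |l - l'|)) + (4 * |l - l'| * ρ ^ k) * 1 := by
            gcongr
        _ = (8 * (k : ℝ) + 4) * (ρ ^ k * |l - l'|) := by ring
    -- term 2 bound
    have t2 : |v| * |b| ^ k * |g - g'| * ρ
        ≤ 2 * ρ ^ k * ((L : ℝ) * (((k : ℝ) + 1) * (|m1 - m1'| + |m2 - m2'|))) := by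
      calc |v| * |b| ^ k * |g - g'| * ρ
          ≤ |v| * |b| ^ k * |g - g'| * 1 := by
            refine mul_le_mul_of_nonneg_left hρ1.le ?_
            positivity
        _ = |v| * |b| ^ k * |g - g'| := by ring
        _ ≤ 2 * ρ ^ k * ((L : ℝ) * (((k : ℝ) + 1) * (|m1 - m1'| + |m2 - m2'|))) := by
            refine mul_le_mul ?_ hgg' (abs_nonneg _) (by positivity)
            rw [abs_of_pos hv0]
            exact mul_le_mul hv2 hbk (by positivity) (by norm_num)
    have hgM : |g| ≤ M := hM _
    have final : |f k - f' k| * ρ ≤ C * D * (((k : ℝ) + 1) * ρ ^ k) := by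
      have step : |f k - f' k| * ρ
          ≤ |u * a ^ k - v * b ^ k| * ρ * M + |v| * |b| ^ k * |g - g'| * ρ := by
        have := mul_le_mul_of_nonneg_right e0 hρ0.le
        calc |f k - f' k| * ρ
            ≤ (|u * a ^ k - v * b ^ k| * |g| + |v| * |b| ^ k * |g - g'|) * ρ := this
          _ = |u * a ^ k - v * b ^ k| * ρ * |g| + |v| * |b| ^ k * |g - g'| * ρ := by ring
          _ ≤ |u * a ^ k - v * b ^ k| * ρ * M + |v| * |b| ^ k * |g - g'| * ρ := by
              refine add_le_add ?_ le_rfl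
              exact mul_le_mul_of_nonneg_left hgM (by positivity)
      refine step.trans ?_
      have b1 : |u * a ^ k - v * b ^ k| * ρ * M ≤ (8 * (k : ℝ) + 4) * (ρ ^ k * D) * M := by
        refine mul_le_mul_of_nonneg_right ?_ hM0
        refine t1.trans ?_
        gcongr
      have b2 : 2 * ρ ^ k * ((L : ℝ) * (((k : ℝ) + 1) * (|m1 - m1'| + |m2 - m2'|)))
          ≤ 2 * ρ ^ k * ((L : ℝ) * (((k : ℝ) + 1) * (D + D))) := by
        gcongr
      have := t2.trans b2
      have hk0 : (0 : ℝ) ≤ (k : ℝ) := by positivity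
      nlinarith [mul_nonneg hP0 hD0, mul_nonneg (mul_nonneg hk0 hP0) hD0,
        NNReal.coe_nonneg L, mul_nonneg (mul_nonneg hP0 hD0) hM0]
    exact final
  -- assemble
  have hnorm : Summable (fun k => ‖f k - f' k‖) := by
    refine Summable.of_nonneg_of_le (fun k => norm_nonneg _) hkey ?_
    exact hsum.mul_left _
  rw [hA, hA', ← hf.tsum_sub hf']
  calc |∑' k, (f k - f' k)|
      ≤ ∑' k, ‖f k - f' k‖ := by
        rw [← Real.norm_eq_abs]
        exact norm_tsum_le_tsum_norm hnorm
    _ ≤ ∑' k : ℕ, C * D / ρ * (((k : ℝ) + 1) * ρ ^ k) :=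
        Summable.tsum_le_tsum hkey hnorm (hsum.mul_left _)
    _ = C * D / ρ * S := tsum_mul_left
    _ = C * S / ρ * D := by ring
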